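/- The set of triples (S, L, H) with S unitary on 𝔥⊗𝔎, L : 𝔥 → 𝔥⊗𝔎 bounded, H self-adjoint on 𝔥, equipped with the operation (S₂,L₂,H₂) ◁ (S₁,L₁,H₁) = (S₂S₁, L₂ + S₂L₁, H₁ + H₂ + (L₂†S₂L₁ - L₁†S₂†L₂)/(2i)), forms a group with identity (I, 0, 0) and inverse (S, L, H)⁻¹ = (S†, -S†L, -H). -/
import Mathlib


open Matrix

/-- A Hudson–Parthasarathy triple `(S, L, H)`: an operator `S` on `𝔥⊗𝔎` (a `q×q`
matrix), an operator `L : 𝔥 → 𝔥⊗𝔎` (a `q×p` matrix), and an operator `H` on `𝔥`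
(a `p×p` matrix). -/
abbrev HPTriple (p q : ℕ) :=
  Matrix (Fin q) (Fin q) ℂ × Matrix (Fin q) (Fin p) ℂ × Matrix (Fin p) (Fin p) ℂ

/-- The series product
`(S₂,L₂,H₂) ◁ (S₁,L₁,H₁) = (S₂S₁, L₂ + S₂L₁, H₁ + H₂ + (L₂†S₂L₁ - L₁†S₂†L₂)/(2i))`. -/
noncomputable def tripleOp {p q : ℕ} (g₂ g₁ : HPTriple p q) : HPTriple p q :=
  ⟨g₂.1 * g₁.1, g₂.2.1 + g₂.1 * g₁.2.1,
   g₁.2.2 + g₂.2.2 +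
     (2 * Complex.I)⁻¹ • (g₂.2.1ᴴ * g₂.1 * g₁.2.1 - g₁.2.1ᴴ * g₂.1ᴴ * g₂.2.1)⟩

/-- A triple `(S, L, H)` with `S` unitary and `H` self-adjoint. -/
def IsHP {p q : ℕ} (g : HPTriple p q) : Prop :=
  g.1 ∈ Matrix.unitaryGroup (Fin q) ℂ ∧ g.2.2ᴴ = g.2.2
private lemma star2I : star (2 * Complex.I)⁻¹ = -(2 * Complex.I)⁻¹ := by
  have : (starRingEnd ℂ) (2 * Complex.I)⁻¹ = -(2 * Complex.I)⁻¹ := by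
    rw [map_inv₀, _root_.map_mul, Complex.conj_I]
    simp [← neg_inv, Complex.conj_ofNat]
  simpa using this

/-- The triples `(S, L, H)` with `S` unitary and `H` self-adjoint form a group under the
series product, with identity `(I, 0, 0)` and inverse `(S,L,H)⁻¹ = (S†, -S†L, -H)`. -/
theorem hpTriple_group {p q : ℕ} :
    (∀ g₂ g₁ : HPTriple p q, IsHP g₂ → IsHP g₁ → IsHP (tripleOp g₂ g₁)) ∧
    (∀ g₃ g₂ g₁ : HPTriple p q, IsHP g₃ → IsHP g₂ → IsHP g₁ →
        tripleOp (tripleOp g₃ g₂) g₁ = tripleOp g₃ (tripleOp g₂ g₁)) ∧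
    (∀ g : HPTriple p q, IsHP g → tripleOp g ⟨1, 0, 0⟩ = g) ∧
    (∀ g : HPTriple p q, IsHP g → tripleOp ⟨1, 0, 0⟩ g = g) ∧
    (∀ g : HPTriple p q, IsHP g → IsHP ⟨g.1ᴴ, -(g.1ᴴ * g.2.1), -g.2.2⟩) ∧
    (∀ g : HPTriple p q, IsHP g →
        tripleOp g ⟨g.1ᴴ, -(g.1ᴴ * g.2.1), -g.2.2⟩ = ⟨1, 0, 0⟩) ∧
    (∀ g : HPTriple p q, IsHP g →
        tripleOp ⟨g.1ᴴ, -(g.1ᴴ * g.2.1), -g.2.2⟩ g = ⟨1, 0, 0⟩) := by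
  refine ⟨?_, ?_, ?_, ?_, ?_, ?_, ?_⟩
  · rintro ⟨S₂, L₂, H₂⟩ ⟨S₁, L₁, H₁⟩ ⟨hu₂, hh₂⟩ ⟨hu₁, hh₁⟩
    refine ⟨mul_mem hu₂ hu₁, ?_⟩
    simp only [tripleOp, conjTranspose_add, conjTranspose_smul, conjTranspose_sub,
      conjTranspose_mul, conjTranspose_conjTranspose, hh₁, hh₂, star2I, Matrix.mul_assoc,
      neg_smul, smul_sub, neg_sub]
    abel
  · rintro ⟨S₃, L₃, H₃⟩ ⟨S₂, L₂, H₂⟩ ⟨S₁, L₁, H₁⟩ ⟨hu₃, -⟩ ⟨hu₂, -⟩ ⟨hu₁, -⟩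
    have h3 : S₃ᴴ * S₃ = 1 := by
      simpa [Matrix.star_eq_conjTranspose] using (mem_unitaryGroup_iff'.mp hu₃)
    have e1 : ∀ m (B : Matrix (Fin q) (Fin m) ℂ), S₃ᴴ * (S₃ * B) = B := fun m B => by
      rw [← Matrix.mul_assoc, h3, Matrix.one_mul]
    refine Prod.ext (mul_assoc _ _ _) (Prod.ext ?_ ?_)
    · simp [tripleOp, Matrix.mul_add, Matrix.mul_assoc, add_assoc]
    · simp only [tripleOp, conjTranspose_add, conjTranspose_mul, add_mul, mul_add,
        smul_sub, smul_add, Matrix.mul_add, Matrix.add_mul, Matrix.mul_assoc, e1]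
      abel
  · rintro ⟨S, L, H⟩ ⟨hu, hh⟩
    simp [tripleOp]
  · rintro ⟨S, L, H⟩ ⟨hu, hh⟩
    simp [tripleOp]
  · rintro ⟨S, L, H⟩ ⟨hu, hh⟩
    have h1 : Sᴴ * S = 1 := by
      simpa [Matrix.star_eq_conjTranspose] using (mem_unitaryGroup_iff'.mp hu)
    refine ⟨mem_unitaryGroup_iff.mpr ?_, by simpa using hh⟩
    simpa [Matrix.star_eq_conjTranspose] using h1
  · rintro ⟨S, L, H⟩ ⟨hu, hh⟩
    have h1 : S * Sᴴ = 1 := by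
      simpa [Matrix.star_eq_conjTranspose] using (mem_unitaryGroup_iff.mp hu)
    have e : ∀ m (B : Matrix (Fin q) (Fin m) ℂ), S * (Sᴴ * B) = B := fun m B => by
      rw [← Matrix.mul_assoc, h1, Matrix.one_mul]
    simp [tripleOp, Matrix.mul_assoc, e, h1]
  · rintro ⟨S, L, H⟩ ⟨hu, hh⟩
    have h1 : Sᴴ * S = 1 := by
      simpa [Matrix.star_eq_conjTranspose] using (mem_unitaryGroup_iff'.mp hu)
    have e : ∀ m (B : Matrix (Fin q) (Fin m) ℂ), Sᴴ * (S * B) = B := fun m B => by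
      rw [← Matrix.mul_assoc, h1, Matrix.one_mul]
    simp [tripleOp, Matrix.mul_assoc, e, h1]
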